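/- (Level-set lemma) Let U ⊂ Λ ⊂ R^d be measurable with |Λ| = 1 and |U| > 0. Let p ∈ [1,∞], f ∈ L^p(Λ), C, α ∈ [1,∞), Q ∈ [0,∞). Set ε = (C/(1+C))|U| and W = {x ∈ Λ : |f(x)| + Q < (ε/C)^α ‖f‖_{L^p(Λ)}}. Assume sup_{x∈U} |f(x)| + Q ≥ (|U|/C)^α ‖f‖_{L^p(Λ)} and sup_{x∈W} |f(x)| + Q ≥ (|W|/C)^α ‖f‖_{L^p(Λ)}. Then |W| ≤ ε, and for every q with 1 ≤ q ≤ p, q < ∞: ∫_U (|f(x)| + Q)^q dx ≥ (|U|/(1+C))^{qα + 1} ‖f‖_{L^q(Λ)}^q. -/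

import Mathlib

open MeasureTheory ENNReal

/-- Level-set lemma: `U ⊆ Λ ⊆ ℝ^d` measurable, `|Λ| = 1`, `|U| > 0`, `f ∈ L^p(Λ)`,
`C, α ≥ 1`, `Q ≥ 0`, `ε = C/(1+C)·|U|`,
`W = {x ∈ Λ : |f(x)| + Q < (ε/C)^α ‖f‖_{L^p(Λ)}}`. If
`sup_U (|f|+Q) ≥ (|U|/C)^α ‖f‖_{L^p(Λ)}` and `sup_W (|f|+Q) ≥ (|W|/C)^α ‖f‖_{L^p(Λ)}`,
then `|W| ≤ ε` and `∫_U (|f|+Q)^q ≥ (|U|/(1+C))^{qα+1} ‖f‖_{L^q(Λ)}^q` for `1 ≤ q ≤ p`,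
`q < ∞`. -/
theorem stmt_3 (d : ℕ) (Λ U : Set (Fin d → ℝ)) (hUΛ : U ⊆ Λ)
    (hΛm : MeasurableSet Λ) (hUm : MeasurableSet U)
    (hΛ1 : volume Λ = 1) (hU0 : 0 < volume U)
    (p : ℝ≥0∞) (hp : 1 ≤ p) (f : (Fin d → ℝ) → ℂ)
    (hf : MemLp f p (volume.restrict Λ))
    (C α Q : ℝ) (hC : 1 ≤ C) (hα : 1 ≤ α) (hQ : 0 ≤ Q) :
    let N := (eLpNorm f p (volume.restrict Λ)).toReal
    let ε := C / (1 + C) * (volume U).toReal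
    let W := {x ∈ Λ | ‖f x‖ + Q < (ε / C) ^ α * N}
    (⨆ x ∈ U, (‖f x‖ + Q)) ≥ ((volume U).toReal / C) ^ α * N →
    (⨆ x ∈ W, (‖f x‖ + Q)) ≥ ((volume W).toReal / C) ^ α * N →
    volume W ≤ ENNReal.ofReal ε ∧
      ∀ q : ℝ, 1 ≤ q → ENNReal.ofReal q ≤ p →
        (∫ x in U, (‖f x‖ + Q) ^ q) ≥
          ((volume U).toReal / (1 + C)) ^ (q * α + 1) * ∫ x in Λ, ‖f x‖ ^ q := by
  intro N ε W _hsupU hsupW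
  set μ := volume.restrict Λ with hμ
  have hprob : IsProbabilityMeasure μ := ⟨by rw [hμ, Measure.restrict_apply_univ]; exact hΛ1⟩
  have hC0 : (0:ℝ) < C := lt_of_lt_of_le one_pos hC
  have h1C : (0:ℝ) < 1 + C := by linarith
  have hΛfin : volume Λ ≠ ⊤ := by rw [hΛ1]; exact one_ne_top
  have hUfin : volume U ≠ ⊤ := ne_top_of_le_ne_top hΛfin (measure_mono hUΛ)
  set u := (volume U).toReal with hu
  have hu0 : 0 < u := ENNReal.toReal_pos hU0.ne' hUfin
  have hN0 : 0 ≤ N := ENNReal.toReal_nonneg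
  set δ := u / (1 + C) with hδ
  have hδ0 : 0 < δ := div_pos hu0 h1C
  have hεδ : ε / C = δ := by
    field_simp [hδ, ε]
    ring
  -- claim 1 : |W| ≤ ε
  have hWΛ : W ⊆ Λ := fun x hx => hx.1
  have hWfin : volume W ≠ ⊤ := ne_top_of_le_ne_top hΛfin (measure_mono hWΛ)
  have hε0 : 0 ≤ ε := by positivity
  have ht0 : 0 ≤ (ε / C) ^ α * N := by positivity
  have hsup_le : (⨆ x ∈ W, (‖f x‖ + Q)) ≤ (ε / C) ^ α * N :=
    Real.iSup_le (fun x => Real.iSup_le (fun hx => le_of_lt hx.2) ht0) ht0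
  have hkey : ((volume W).toReal / C) ^ α * N ≤ (ε / C) ^ α * N := le_trans hsupW hsup_le
  have hWε : (volume W).toReal ≤ ε := by
    rcases eq_or_lt_of_le hN0 with hN | hN
    · -- N = 0 : W is empty
      have : W = ∅ := by
        ext x
        simp only [W, Set.mem_setOf_eq, Set.mem_empty_iff_false, iff_false, not_and]
        intro _
        rw [← hN]
        nlinarith [norm_nonneg (f x)]
      rw [this]
      simpa using hε0
    · have h1 : ((volume W).toReal / C) ^ α ≤ (ε / C) ^ α :=
        le_of_mul_le_mul_right hkey hN
      by_contra hc
      push_neg at hc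
      have : (ε / C) ^ α < ((volume W).toReal / C) ^ α :=
        Real.rpow_lt_rpow (by positivity) (by exact div_lt_div_of_pos_right hc hC0) (by linarith)
      exact absurd h1 (not_le.2 this)
  have claim1 : volume W ≤ ENNReal.ofReal ε := by
    rw [← ENNReal.ofReal_toReal hWfin]
    exact ENNReal.ofReal_le_ofReal hWε
  refine ⟨claim1, ?_⟩
  -- claim 2
  intro q hq1 hqp
  have hq0 : (0:ℝ) < q := lt_of_lt_of_le one_pos hq1
  set q' := ENNReal.ofReal q with hq'def
  have hq'0 : q' ≠ 0 := by
    simp [hq'def, ENNReal.ofReal_eq_zero]; linarith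
  have hq'top : q' ≠ ⊤ := ofReal_ne_top
  have hq't : q'.toReal = q := ENNReal.toReal_ofReal hq0.le
  have hfq : MemLp f q' μ := hf.mono_exponent hqp
  have hI0 : 0 ≤ ∫ x, ‖f x‖ ^ q ∂μ := integral_nonneg (fun x => by positivity)
  have hint : (eLpNorm f q' μ).toReal ^ q = ∫ x, ‖f x‖ ^ q ∂μ := by
    rw [hfq.eLpNorm_eq_integral_rpow_norm hq'0 hq'top, hq't,
        ENNReal.toReal_ofReal (Real.rpow_nonneg hI0 _),
        ← Real.rpow_mul hI0, inv_mul_cancel₀ hq0.ne', Real.rpow_one]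
  have hmono : (eLpNorm f q' μ).toReal ≤ N :=
    ENNReal.toReal_mono hf.2.ne
      (eLpNorm_le_eLpNorm_of_exponent_le hqp hf.aestronglyMeasurable)
  have hIN : ∫ x, ‖f x‖ ^ q ∂μ ≤ N ^ q := by
    rw [← hint]
    exact Real.rpow_le_rpow ENNReal.toReal_nonneg hmono hq0.le
  -- integrability
  have hF : MemLp (fun x => ‖f x‖ + Q) q' μ := hfq.norm.add (memLp_const Q)
  have hFi : Integrable (fun x => (‖f x‖ + Q) ^ q) μ := by
    have h1 := hF.integrable_norm_rpow hq'0 hq'top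
    rw [hq't] at h1
    refine h1.congr (ae_of_all _ fun x => ?_)
    show ‖‖f x‖ + Q‖ ^ q = (‖f x‖ + Q) ^ q
    rw [Real.norm_of_nonneg (by positivity)]
  have hres : μ.restrict U = volume.restrict U := by
    rw [hμ, Measure.restrict_restrict hUm, Set.inter_eq_self_of_subset_left hUΛ]
  have hFiU : IntegrableOn (fun x => (‖f x‖ + Q) ^ q) U volume := by
    rw [IntegrableOn, ← hres]; exact hFi.restrict
  -- the good set
  set M := toMeasurable volume W with hMdef
  have hMm : MeasurableSet M := measurableSet_toMeasurable _ _
  have hMW : volume M = volume W := measure_toMeasurable W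
  have hMfin : volume M ≠ ⊤ := by rw [hMW]; exact hWfin
  have hUMfin : volume (U \ M) ≠ ⊤ :=
    ne_top_of_le_ne_top hUfin (measure_mono Set.diff_subset)
  have hsubadd : volume U ≤ volume (U \ M) + volume M :=
    le_trans (measure_mono (fun x hx => by
      by_cases h : x ∈ M
      exacts [Set.mem_union_right _ h, Set.mem_union_left _ ⟨hx, h⟩]))
      (measure_union_le _ _)
  have ha : δ ≤ (volume (U \ M)).toReal := by
    have h1 : u ≤ (volume (U \ M)).toReal + (volume M).toReal := by
      rw [← ENNReal.toReal_add hUMfin hMfin]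
      exact ENNReal.toReal_mono (by
        exact ENNReal.add_ne_top.2 ⟨hUMfin, hMfin⟩) hsubadd
    have h2 : (volume M).toReal ≤ ε := by rw [hMW]; exact hWε
    have h3 : δ = u - ε := by
      show u / (1 + C) = u - C / (1 + C) * u
      field_simp
      ring
    linarith
  set t := δ ^ α * N with htdef
  have ht0' : (0:ℝ) ≤ t := by positivity
  have hpt : ∀ x ∈ U \ M, t ≤ ‖f x‖ + Q := by
    intro x hx
    have hxΛ : x ∈ Λ := hUΛ hx.1
    by_contra hcon
    push_neg at hcon
    rw [htdef, ← hεδ] at hcon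
    exact hx.2 (subset_toMeasurable _ _ ⟨hxΛ, hcon⟩)
  have hUM : MeasurableSet (U \ M) := hUm.diff hMm
  have hFiUM : IntegrableOn (fun x => (‖f x‖ + Q) ^ q) (U \ M) volume :=
    hFiU.mono_set Set.diff_subset
  have step1 : t ^ q * (volume (U \ M)).toReal ≤ ∫ x in U \ M, (‖f x‖ + Q) ^ q := by
    have hconst : IntegrableOn (fun _ => t ^ q) (U \ M) volume :=
      integrableOn_const hUMfin
    have := setIntegral_mono_on hconst hFiUM hUM
      (fun x hx => Real.rpow_le_rpow ht0' (hpt x hx) hq0.le)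
    rwa [setIntegral_const, smul_eq_mul, mul_comm] at this
  have step2 : ∫ x in U \ M, (‖f x‖ + Q) ^ q ≤ ∫ x in U, (‖f x‖ + Q) ^ q :=
    setIntegral_mono_set hFiU (ae_of_all _ fun x => by positivity)
      (HasSubset.Subset.eventuallyLE Set.diff_subset)
  have step3 : t ^ q * δ ≤ ∫ x in U, (‖f x‖ + Q) ^ q := by
    have := mul_le_mul_of_nonneg_left ha (Real.rpow_nonneg ht0' q)
    linarith
  have key : δ ^ (q * α + 1) * N ^ q ≤ ∫ x in U, (‖f x‖ + Q) ^ q := by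
    have heq : δ ^ (q * α + 1) * N ^ q = t ^ q * δ := by
      rw [htdef, Real.mul_rpow (Real.rpow_nonneg hδ0.le _) hN0,
          Real.rpow_add hδ0, Real.rpow_one, mul_comm q α, Real.rpow_mul hδ0.le]
      ring
    rw [heq]; exact step3
  have hfinal : δ ^ (q * α + 1) * (∫ x, ‖f x‖ ^ q ∂μ) ≤ δ ^ (q * α + 1) * N ^ q :=
    mul_le_mul_of_nonneg_left hIN (Real.rpow_nonneg hδ0.le _)
  calc ((volume U).toReal / (1 + C)) ^ (q * α + 1) * ∫ x in Λ, ‖f x‖ ^ q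
      = δ ^ (q * α + 1) * (∫ x, ‖f x‖ ^ q ∂μ) := by rw [hδ, hu, hμ]
    _ ≤ δ ^ (q * α + 1) * N ^ q := hfinal
    _ ≤ ∫ x in U, (‖f x‖ + Q) ^ q := key
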